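/- arXiv:gr-qc/0204044 — 2 statements merged into one kernel-verified Lean document; each statement's English description precedes it below -/
import Mathlib

section
/- Let γ > 0, C ≥ 0, and let E : [τ₀, ∞) → ℝ be a nonnegative differentiable function, and π : ℝ → ℝ a continuous nonnegative function, such that E'(τ) ≤ -2γ E(τ) + C·π(τ - τ₀)·exp(-γ(τ - τ₀))·E(τ)^{1/2} for all τ ≥ τ₀. Then for all τ ≥ τ₀, E(τ)^{1/2} ≤ (E(τ₀)^{1/2} + (C/2)·∫_{τ₀}^{τ} π(s - τ₀) ds) · exp(-γ(τ - τ₀)). -/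
open Real MeasureTheory Filter

theorem stmt_1 (γ τ₀ C : ℝ) (hγ : 0 < γ) (hC : 0 ≤ C)
    (E : ℝ → ℝ) (Pi : ℝ → ℝ)
    (hE0 : ∀ τ, τ₀ ≤ τ → 0 ≤ E τ)
    (hdiff : ∀ τ, τ₀ ≤ τ → DifferentiableAt ℝ E τ)
    (hPic : Continuous Pi) (hPi0 : ∀ s, 0 ≤ Pi s)
    (hineq : ∀ τ, τ₀ ≤ τ →
      deriv E τ ≤ -2 * γ * E τ + C * Pi (τ - τ₀) * Real.exp (-γ * (τ - τ₀)) * Real.sqrt (E τ)) :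
    ∀ τ, τ₀ ≤ τ →
      Real.sqrt (E τ) ≤ (Real.sqrt (E τ₀) + (C / 2) * ∫ s in τ₀..τ, Pi (s - τ₀)) *
        Real.exp (-γ * (τ - τ₀)) := by
  intro τ hτ
  set Δ : ℝ → ℝ := fun t => Real.exp (γ * (t - τ₀)) with hΔdef
  have hΔpos : ∀ t, 0 < Δ t := fun t => Real.exp_pos _
  have hΔd : ∀ t, HasDerivAt Δ (γ * Δ t) t := by
    intro t
    have h1 : HasDerivAt (fun t => γ * (t - τ₀)) γ t := by
      simpa using ((hasDerivAt_id t).sub_const τ₀).const_mul γ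
    simpa [hΔdef, mul_comm] using h1.exp
  set g : ℝ → ℝ := fun t => (Δ t) ^ 2 * E t with hgdef
  have hgd : ∀ t, τ₀ ≤ t →
      HasDerivAt g ((Δ t) ^ 2 * (deriv E t + 2 * γ * E t)) t := by
    intro t ht
    have hE := (hdiff t ht).hasDerivAt
    have := (((hΔd t).pow 2).mul hE)
    refine this.congr_deriv ?_
    simp only [_root_.Pi.pow_apply]; push_cast; ring
  have hg0 : ∀ t, τ₀ ≤ t → 0 ≤ g t := fun t ht =>
    mul_nonneg (sq_nonneg _) (hE0 t ht)
  have hsq : ∀ t, Real.sqrt (g t) = Δ t * Real.sqrt (E t) := by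
    intro t
    rw [hgdef]
    rw [Real.sqrt_mul (sq_nonneg _), Real.sqrt_sq (hΔpos t).le]
  -- derivative bound for g
  have hgbound : ∀ t, τ₀ ≤ t →
      (Δ t) ^ 2 * (deriv E t + 2 * γ * E t) ≤ C * Pi (t - τ₀) * Real.sqrt (g t) := by
    intro t ht
    have h1 : deriv E t + 2 * γ * E t ≤
        C * Pi (t - τ₀) * Real.exp (-γ * (t - τ₀)) * Real.sqrt (E t) := by
      have := hineq t ht; linarith
    have h2 : (Δ t) ^ 2 * (deriv E t + 2 * γ * E t) ≤
        (Δ t) ^ 2 * (C * Pi (t - τ₀) * Real.exp (-γ * (t - τ₀)) * Real.sqrt (E t)) :=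
      mul_le_mul_of_nonneg_left h1 (sq_nonneg _)
    refine h2.trans_eq ?_
    rw [hsq t]
    have hexp : (Δ t) ^ 2 * Real.exp (-γ * (t - τ₀)) = Δ t := by
      rw [hΔdef]
      rw [← Real.exp_nat_mul, ← Real.exp_add]
      ring_nf
    calc (Δ t) ^ 2 * (C * Pi (t - τ₀) * Real.exp (-γ * (t - τ₀)) * Real.sqrt (E t))
        = ((Δ t) ^ 2 * Real.exp (-γ * (t - τ₀))) * (C * Pi (t - τ₀) * Real.sqrt (E t)) := by ring
      _ = C * Pi (t - τ₀) * (Δ t * Real.sqrt (E t)) := by rw [hexp]; ring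
  -- the integral function
  set I : ℝ → ℝ := fun t => ∫ s in τ₀..t, Pi (s - τ₀) with hIdef
  have hPc : Continuous (fun s => Pi (s - τ₀)) := hPic.comp (continuous_sub_right τ₀)
  have hId : ∀ t, HasDerivAt I (Pi (t - τ₀)) t := by
    intro t
    exact intervalIntegral.integral_hasDerivAt_right
      (hPc.intervalIntegrable _ _)
      (hPc.stronglyMeasurableAtFilter _ _)
      hPc.continuousAt
  have hI0 : I τ₀ = 0 := by simp [hIdef]
  -- continuity of g on Ici τ₀
  have hgcont : ContinuousOn g (Set.Ici τ₀) := by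
    intro t ht
    exact ((hgd t ht).continuousAt).continuousWithinAt
  -- for each ε > 0, get the comparison
  have key : ∀ ε : ℝ, 0 < ε →
      Real.sqrt (g τ) ≤ Real.sqrt (E τ₀ + ε) + C / 2 * I τ := by
    intro ε hε
    set H : ℝ → ℝ := fun t => Real.sqrt (g t + ε) - C / 2 * I t with hHdef
    have hHd : ∀ t, τ₀ ≤ t →
        HasDerivAt H ((Δ t) ^ 2 * (deriv E t + 2 * γ * E t) / (2 * Real.sqrt (g t + ε))
          - C / 2 * Pi (t - τ₀)) t := by
      intro t ht
      have hgt0 := hg0 t ht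
      have hne : g t + ε ≠ 0 := by positivity
      exact (((hgd t ht).add_const ε).sqrt hne).sub ((hId t).const_mul (C / 2))
    have hanti : AntitoneOn H (Set.Ici τ₀) := by
      apply antitoneOn_of_deriv_nonpos (convex_Ici τ₀)
      · apply ContinuousOn.sub
        · exact (hgcont.add continuousOn_const).sqrt
        · exact (continuousOn_const.mul (fun t _ => (hId t).continuousAt.continuousWithinAt))
      · intro t ht
        rw [interior_Ici] at ht
        exact ((hHd t ht.le).differentiableAt).differentiableWithinAt
      · intro t ht
        rw [interior_Ici] at ht
        rw [(hHd t ht.le).deriv]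
        have hgt : 0 ≤ g t := hg0 t ht.le
        have hsle : Real.sqrt (g t) ≤ Real.sqrt (g t + ε) :=
          Real.sqrt_le_sqrt (by linarith)
        have hspos : 0 < Real.sqrt (g t + ε) := Real.sqrt_pos.2 (by linarith)
        have hnum : (Δ t) ^ 2 * (deriv E t + 2 * γ * E t) ≤
            C * Pi (t - τ₀) * Real.sqrt (g t + ε) := by
          refine (hgbound t ht.le).trans ?_
          exact mul_le_mul_of_nonneg_left hsle (mul_nonneg hC (hPi0 _))
        rw [sub_nonpos, div_le_iff₀ (by positivity)]
        calc (Δ t) ^ 2 * (deriv E t + 2 * γ * E t)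
            ≤ C * Pi (t - τ₀) * Real.sqrt (g t + ε) := hnum
          _ = C / 2 * Pi (t - τ₀) * (2 * Real.sqrt (g t + ε)) := by ring
    have hH := hanti (Set.self_mem_Ici) hτ hτ
    have hgτ₀ : g τ₀ = E τ₀ := by simp [hgdef, hΔdef]
    have h2 : Real.sqrt (g τ + ε) ≤ Real.sqrt (E τ₀ + ε) + C / 2 * I τ := by
      have := hH
      rw [hHdef] at this
      simp only [hI0, hgτ₀] at this
      linarith
    exact (Real.sqrt_le_sqrt (by linarith)).trans h2
  -- pass to the limit ε → 0⁺
  have hlim : Real.sqrt (g τ) ≤ Real.sqrt (E τ₀) + C / 2 * I τ := by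
    have htend : Tendsto (fun ε : ℝ => Real.sqrt (E τ₀ + ε) + C / 2 * I τ) (nhdsWithin 0 (Set.Ioi 0))
        (nhds (Real.sqrt (E τ₀) + C / 2 * I τ)) := by
      have hc : Continuous (fun ε : ℝ => Real.sqrt (E τ₀ + ε) + C / 2 * I τ) := by
        continuity
      have := hc.continuousAt (x := (0:ℝ))
      simpa using this.tendsto.mono_left nhdsWithin_le_nhds
    refine ge_of_tendsto htend ?_
    filter_upwards [self_mem_nhdsWithin] with ε hε
    exact key ε hε
  -- conclude
  have hfin : Real.sqrt (E τ) = Real.sqrt (g τ) * Real.exp (-γ * (τ - τ₀)) := by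
    rw [hsq τ, hΔdef]
    rw [mul_comm (Real.exp _) _, mul_assoc, ← Real.exp_add]
    simp
  rw [hfin]
  exact mul_le_mul_of_nonneg_right hlim (Real.exp_nonneg _)
end

section
/- Let H : [τ₀, ∞) → ℝ be nonnegative and differentiable, γ > 0, and W₁, W₂ : ℝ → ℝ continuous nonnegative functions such that H'(τ) ≤ W₁(τ - τ₀)·exp(-γ(τ-τ₀)/2)·H(τ)^{1/2} + W₂(τ - τ₀)·exp(-γ(τ-τ₀)/2)·H(τ) for all τ ≥ τ₀, where ∫_0^∞ (W₁(u) + W₂(u))·exp(-γu/2) du < ∞. Then H is bounded on [τ₀, ∞). -/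
open Real MeasureTheory

theorem stmt_8 (γ τ₀ : ℝ) (hγ : 0 < γ)
    (H W₁ W₂ : ℝ → ℝ)
    (hH0 : ∀ τ, τ₀ ≤ τ → 0 ≤ H τ)
    (hdiff : ∀ τ, τ₀ ≤ τ → DifferentiableAt ℝ H τ)
    (hW₁c : Continuous W₁) (hW₂c : Continuous W₂)
    (hW₁0 : ∀ u, 0 ≤ W₁ u) (hW₂0 : ∀ u, 0 ≤ W₂ u)
    (hint : IntegrableOn (fun u => (W₁ u + W₂ u) * Real.exp (-γ * u / 2)) (Set.Ioi (0 : ℝ)))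
    (hineq : ∀ τ, τ₀ ≤ τ →
      deriv H τ ≤ W₁ (τ - τ₀) * Real.exp (-γ * (τ - τ₀) / 2) * Real.sqrt (H τ) +
        W₂ (τ - τ₀) * Real.exp (-γ * (τ - τ₀) / 2) * H τ) :
    ∃ M : ℝ, ∀ τ, τ₀ ≤ τ → H τ ≤ M := by
  set g : ℝ → ℝ := fun u => (W₁ u + W₂ u) * Real.exp (-γ * u / 2) with hgdef
  have hgc : Continuous g := by
    apply (hW₁c.add hW₂c).mul
    exact Real.continuous_exp.comp ((continuous_const.mul continuous_id).div_const 2)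
  have hg0 : ∀ u, 0 ≤ g u := fun u =>
    mul_nonneg (add_nonneg (hW₁0 u) (hW₂0 u)) (Real.exp_pos _).le
  set w : ℝ → ℝ := fun τ => g (τ - τ₀) with hwdef
  have hwc : Continuous w := hgc.comp (continuous_id.sub continuous_const)
  set C : ℝ := ∫ u in Set.Ioi (0 : ℝ), g u with hCdef
  set V : ℝ → ℝ := fun τ => ∫ s in τ₀..τ, w s with hVdef
  have hVd : ∀ τ : ℝ, HasDerivAt V (w τ) τ := by
    intro τ
    exact intervalIntegral.integral_hasDerivAt_right (hwc.intervalIntegrable _ _)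
      (hwc.stronglyMeasurableAtFilter _ _) hwc.continuousAt
  have hHpos : ∀ τ, τ₀ ≤ τ → 0 < 1 + H τ := fun τ h => by linarith [hH0 τ h]
  have key : ∀ τ, τ₀ ≤ τ → deriv H τ ≤ w τ * (1 + H τ) := by
    intro τ hτ
    have hs : Real.sqrt (H τ) ≤ 1 + H τ := by
      nlinarith [Real.sq_sqrt (hH0 τ hτ), Real.sqrt_nonneg (H τ)]
    have he : (0:ℝ) < Real.exp (-γ * (τ - τ₀) / 2) := Real.exp_pos _
    have h1 : W₁ (τ - τ₀) * Real.exp (-γ * (τ - τ₀) / 2) * Real.sqrt (H τ) ≤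
        W₁ (τ - τ₀) * Real.exp (-γ * (τ - τ₀) / 2) * (1 + H τ) :=
      mul_le_mul_of_nonneg_left hs (mul_nonneg (hW₁0 _) he.le)
    have h2 : W₂ (τ - τ₀) * Real.exp (-γ * (τ - τ₀) / 2) * H τ ≤
        W₂ (τ - τ₀) * Real.exp (-γ * (τ - τ₀) / 2) * (1 + H τ) :=
      mul_le_mul_of_nonneg_left (by linarith) (mul_nonneg (hW₂0 _) he.le)
    have := hineq τ hτ
    have hwτ : w τ * (1 + H τ) =
        W₁ (τ - τ₀) * Real.exp (-γ * (τ - τ₀) / 2) * (1 + H τ) +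
        W₂ (τ - τ₀) * Real.exp (-γ * (τ - τ₀) / 2) * (1 + H τ) := by
      simp only [hwdef, hgdef]; ring
    rw [hwτ]
    linarith
  set ψ : ℝ → ℝ := fun τ => Real.log (1 + H τ) - V τ with hψdef
  have hψd : ∀ τ, τ₀ ≤ τ → HasDerivAt ψ (deriv H τ / (1 + H τ) - w τ) τ := by
    intro τ hτ
    have h1 : HasDerivAt (fun τ => 1 + H τ) (deriv H τ) τ :=
      ((hdiff τ hτ).hasDerivAt).const_add 1
    exact (h1.log (hHpos τ hτ).ne').sub (hVd τ)
  have hanti : AntitoneOn ψ (Set.Ici τ₀) := by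
    apply antitoneOn_of_deriv_nonpos (convex_Ici τ₀)
    · intro x hx
      exact ((hψd x hx).differentiableAt).continuousAt.continuousWithinAt
    · intro x hx
      rw [interior_Ici] at hx
      exact ((hψd x hx.le).differentiableAt).differentiableWithinAt
    · intro x hx
      rw [interior_Ici] at hx
      rw [(hψd x hx.le).deriv]
      have hp := hHpos x hx.le
      rw [sub_nonpos, div_le_iff₀ hp]
      exact key x hx.le
  refine ⟨(1 + H τ₀) * Real.exp C, fun τ hτ => ?_⟩
  have hψ : ψ τ ≤ ψ τ₀ := hanti (Set.self_mem_Ici) hτ hτ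
  have hV0 : V τ₀ = 0 := intervalIntegral.integral_same
  have hVC : V τ ≤ C := by
    have h1 : V τ = ∫ u in (0:ℝ)..(τ - τ₀), g u := by
      rw [hVdef]
      simp only [hwdef]
      rw [intervalIntegral.integral_comp_sub_right (fun s => g s) τ₀, sub_self]
    rw [h1, intervalIntegral.integral_of_le (by linarith : (0:ℝ) ≤ τ - τ₀)]
    exact setIntegral_mono_set hint
      (Filter.Eventually.of_forall fun u => hg0 u)
      (HasSubset.Subset.eventuallyLE Set.Ioc_subset_Ioi_self)
  have hlog : Real.log (1 + H τ) ≤ Real.log (1 + H τ₀) + C := by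
    simp only [hψdef, hV0, sub_zero] at hψ
    linarith
  have h2 : 1 + H τ ≤ (1 + H τ₀) * Real.exp C := by
    calc 1 + H τ = Real.exp (Real.log (1 + H τ)) :=
          (Real.exp_log (hHpos τ hτ)).symm
      _ ≤ Real.exp (Real.log (1 + H τ₀) + C) := Real.exp_le_exp.2 hlog
      _ = (1 + H τ₀) * Real.exp C := by
          rw [Real.exp_add, Real.exp_log (hHpos τ₀ le_rfl)]
  linarith
end
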